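/- For j = 1,…,p let (M_j,d_j) be proper geodesic metric spaces, let b = (b_1,…,b_p) be a basepoint of the product (∏_{j=1}^p M_j, d_∞), and let h be a horofunction of the product with basepoint b. If (y^n) is a sequence in ∏_{j=1}^p M_j with h_{y^n} → h pointwise, then there exist a non-empty set J ⊆ {1,…,p}, horofunctions h_j of (M_j,d_j) with basepoint b_j for j ∈ J, a vector α ∈ ℝ^J with min_{j∈J} α_j = 0, and a subsequence (y^{n_k}) such that: (1) d_∞(b,y^{n_k}) − d_j(b_j, y_j^{n_k}) → α_j for all j ∈ J; (2) d_∞(b,y^{n_k}) − d_i(b_i, y_i^{n_k}) → ∞ for all i ∉ J; (3) h_{y_j^{n_k}} → h_j pointwise for all j ∈ J. Moreover, h(x) = max_{j∈J} (h_j(x_j) − α_j) for all x = (x_1,…,x_p) ∈ ∏_{j=1}^p M_j. -/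

import Mathlib

open Filter Topology

noncomputable section

/-- `horo b y z = d(z,y) - d(b,y)`, the function `h_y` with basepoint `b`. -/
def horo {M : Type*} [MetricSpace M] (b y z : M) : ℝ := dist z y - dist b y

/-- `HoroLim b y h` : the functions `h_{y^n}` (with basepoint `b`) converge pointwise to `h`. -/
def HoroLim {M : Type*} [MetricSpace M] (b : M) (y : ℕ → M) (h : M → ℝ) : Prop :=
  ∀ z : M, Filter.Tendsto (fun n => horo b (y n) z) Filter.atTop (nhds (h z))

/-- `h` is a horofunction of `(M,d)` with basepoint `b`. -/
def IsHorofunction {M : Type*} [MetricSpace M] (b : M) (h : M → ℝ) : Prop :=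
  (∃ y : ℕ → M, HoroLim b y h) ∧ ∀ y : M, h ≠ horo b y

/-- A metric space is geodesic: any two points are joined by a geodesic path. -/
def IsGeodesicSpace (M : Type*) [MetricSpace M] : Prop :=
  ∀ x y : M, ∃ γ : ℝ → M, γ 0 = x ∧ γ (dist x y) = y ∧
    ∀ s ∈ Set.Icc (0 : ℝ) (dist x y), ∀ t ∈ Set.Icc (0 : ℝ) (dist x y),
      dist (γ s) (γ t) = |s - t|

/-- Almost geodesic sequence. -/
def IsAlmostGeodesicSeq {M : Type*} [MetricSpace M] (y : ℕ → M) : Prop :=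
  Filter.Tendsto (fun n => dist (y n) (y 0)) Filter.atTop Filter.atTop ∧
  ∀ ε > (0 : ℝ), ∃ N : ℕ, ∀ m k : ℕ, N ≤ k → k ≤ m →
    dist (y m) (y k) + dist (y k) (y 0) - dist (y m) (y 0) < ε

/-- A Busemann point: a horofunction that is the limit of an almost geodesic sequence. -/
def IsBusemannPoint {M : Type*} [MetricSpace M] (b : M) (h : M → ℝ) : Prop :=
  IsHorofunction b h ∧ ∃ y : ℕ → M, IsAlmostGeodesicSeq y ∧ HoroLim b y h

/-- Detour cost `H(h₁,h₂)`, with values in `EReal` (so it may be `⊤ = ∞`). -/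
def detourCost {M : Type*} [MetricSpace M] (b : M) (h₁ h₂ : M → ℝ) : EReal :=
  ⨅ z : {z : ℕ → M // HoroLim b z h₁},
    Filter.liminf (fun n => ((dist b (z.1 n) + h₂ (z.1 n) : ℝ) : EReal)) Filter.atTop

/-- Detour distance `δ(h₁,h₂) = H(h₁,h₂) + H(h₂,h₁)`. -/
def detourDist {M : Type*} [MetricSpace M] (b : M) (h₁ h₂ : M → ℝ) : EReal :=
  detourCost b h₁ h₂ + detourCost b h₂ h₁

namespace StmtAux

lemma horo_lip {M : Type*} [MetricSpace M] (b y z w : M) :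
    |horo b y z - horo b y w| ≤ dist z w := by
  have := abs_dist_sub_le z w y
  simpa [horo, sub_sub_sub_cancel_right] using this

lemma abs_horo_le {M : Type*} [MetricSpace M] (b y z : M) : |horo b y z| ≤ dist b z := by
  have := abs_dist_sub_le z b y
  simpa [horo, dist_comm] using this

lemma dist_pi_eq_sup' {p : ℕ} {M : Fin p → Type*} [∀ j, MetricSpace (M j)]
    (hne : (Finset.univ : Finset (Fin p)).Nonempty) (x y : ∀ j, M j) :
    dist x y = Finset.univ.sup' hne (fun j => dist (x j) (y j)) := by
  apply le_antisymm
  · refine (dist_pi_le_iff ?_).2 fun j =>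
      Finset.le_sup' (fun j => dist (x j) (y j)) (Finset.mem_univ j)
    obtain ⟨j, -⟩ := hne
    exact le_trans dist_nonneg (Finset.le_sup' (fun j => dist (x j) (y j)) (Finset.mem_univ j))
  · exact Finset.sup'_le _ _ fun j _ => dist_le_pi_dist x y j

lemma sup'_sub_const {ι : Type*} (t : Finset ι) (ht : t.Nonempty) (f : ι → ℝ) (c : ℝ) :
    t.sup' ht (fun i => f i - c) = t.sup' ht f - c :=
  (Finset.comp_sup'_eq_sup'_comp ht (f := f) (fun x : ℝ => x - c)
    (fun x y => (max_sub_sub_right x y c).symm)).symm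

lemma tendsto_finset_sup' {ι β : Type*} {l : Filter β} [l.NeBot] :
    ∀ (s : Finset ι) (hs : s.Nonempty) (f : ι → β → ℝ) (a : ι → ℝ),
    (∀ j ∈ s, Tendsto (f j) l (𝓝 (a j))) →
    Tendsto (fun n => s.sup' hs fun j => f j n) l (𝓝 (s.sup' hs a)) := by
  intro s hs
  induction hs using Finset.Nonempty.cons_induction with
  | singleton j => intro f a hf; simpa using hf j (by simp)
  | cons j s hj hs ih =>
      intro f a hf
      simp only [Finset.sup'_cons (H := hs)]
      exact (hf j (by simp)).max (ih f a fun i hi => hf i (by simp [hi]))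

lemma dist_tendsto_atTop_of_horofunction {N : Type*} [MetricSpace N] [ProperSpace N]
    {b : N} {h : N → ℝ} (hh : IsHorofunction b h) {y : ℕ → N} (hy : HoroLim b y h) :
    Tendsto (fun n => dist b (y n)) atTop atTop := by
  by_contra hcon
  rw [tendsto_atTop] at hcon; push_neg at hcon
  obtain ⟨B, hB⟩ := hcon
  obtain ⟨φ, hφ, hφB⟩ := Filter.extraction_of_frequently_atTop hB
  have hmem : ∀ k, y (φ k) ∈ Metric.closedBall b B := fun k =>
    Metric.mem_closedBall'.2 (hφB k).le
  obtain ⟨w, -, ψ, hψ, hw⟩ := (isCompact_closedBall b B).tendsto_subseq hmem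
  apply hh.2 w
  funext z
  have hdz : Tendsto (fun k => dist z (y (φ (ψ k)))) atTop (𝓝 (dist z w)) :=
    tendsto_const_nhds.dist hw
  have hdb : Tendsto (fun k => dist b (y (φ (ψ k)))) atTop (𝓝 (dist b w)) :=
    tendsto_const_nhds.dist hw
  have h1 : Tendsto (fun k => horo b (y (φ (ψ k))) z) atTop (𝓝 (horo b w z)) := by
    simpa [horo] using hdz.sub hdb
  have h2 : Tendsto (fun k => horo b (y (φ (ψ k))) z) atTop (𝓝 (h z)) :=
    (hy z).comp ((hφ.comp hψ).tendsto_atTop)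
  exact tendsto_nhds_unique h2 h1

lemma exists_le_of_horoLim_atTop {N : Type*} [MetricSpace N] [ProperSpace N]
    (hgeo : IsGeodesicSpace N) (b : N) (g : N → ℝ) (v : ℕ → N)
    (hv : HoroLim b v g) (hd : Tendsto (fun k => dist b (v k)) atTop atTop)
    (C : ℝ) : ∃ z, g z ≤ C := by
  set t : ℝ := max 0 (-C) with ht
  have ht0 : 0 ≤ t := le_max_left _ _
  have htC : -t ≤ C := by
    have := le_max_right 0 (-C); linarith
  obtain ⟨K, hK⟩ := eventually_atTop.1 (tendsto_atTop.1 hd t)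
  have hzex : ∀ k, ∃ w : N,
      (t ≤ dist b (v k) → dist b w = t ∧ dist w (v k) = dist b (v k) - t) ∧ dist b w ≤ t := by
    intro k
    by_cases hk : t ≤ dist b (v k)
    · obtain ⟨γ, hγ0, hγ1, hγd⟩ := hgeo b (v k)
      have hbd : dist b (γ t) = t := by
        have := hγd 0 ⟨le_refl 0, dist_nonneg⟩ t ⟨ht0, hk⟩
        rw [hγ0] at this
        rw [this, abs_of_nonpos (by linarith), neg_sub, sub_zero]
      refine ⟨γ t, fun _ => ⟨hbd, ?_⟩, le_of_eq hbd⟩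
      have := hγd t ⟨ht0, hk⟩ (dist b (v k)) ⟨dist_nonneg, le_refl _⟩
      rw [hγ1] at this
      rw [this, abs_of_nonpos (by linarith)]
      ring
    · exact ⟨b, fun h' => absurd h' hk, by simpa using ht0⟩
  choose z hz1 hz2 using hzex
  obtain ⟨w, -, ψ, hψ, hw⟩ := (isCompact_closedBall b t).tendsto_subseq
    (fun k => Metric.mem_closedBall'.2 (hz2 k))
  refine ⟨w, le_trans ?_ htC⟩
  have hgw : Tendsto (fun m => horo b (v (ψ m)) w) atTop (𝓝 (g w)) :=
    (hv w).comp hψ.tendsto_atTop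
  have hbound : Tendsto (fun m => -t + dist w (z (ψ m))) atTop (𝓝 (-t)) := by
    have hd0 : Tendsto (fun m => dist w (z (ψ m))) atTop (𝓝 0) := by
      have h' := hw.dist (tendsto_const_nhds (α := ℕ) (x := w))
      simpa [dist_comm] using h'
    simpa using (tendsto_const_nhds (α := ℕ) (x := -t)).add hd0
  refine le_of_tendsto_of_tendsto hgw hbound ?_
  have hev : ∀ᶠ m in atTop, K ≤ ψ m :=
    eventually_atTop.2 ⟨K, fun m hm => le_trans hm (hψ.le_apply)⟩
  filter_upwards [hev] with m hm
  have hk := hK (ψ m) hm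
  obtain ⟨hbz, hzv⟩ := hz1 (ψ m) hk
  have hhz : horo b (v (ψ m)) (z (ψ m)) = -t := by
    rw [horo, hzv]; ring
  have := horo_lip b (v (ψ m)) w (z (ψ m))
  have h3 : horo b (v (ψ m)) w ≤ horo b (v (ψ m)) (z (ψ m)) + dist w (z (ψ m)) := by
    have := le_abs_self (horo b (v (ψ m)) w - horo b (v (ψ m)) (z (ψ m)))
    linarith [horo_lip b (v (ψ m)) w (z (ψ m))]
  rw [hhz] at h3
  simpa using h3

lemma isHorofunction_of_dist_tendsto_atTop {N : Type*} [MetricSpace N] [ProperSpace N]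
    (hgeo : IsGeodesicSpace N) (b : N) (g : N → ℝ) (v : ℕ → N)
    (hv : HoroLim b v g) (hd : Tendsto (fun k => dist b (v k)) atTop atTop) :
    IsHorofunction b g := by
  refine ⟨⟨v, hv⟩, fun w hw => ?_⟩
  obtain ⟨z, hzle⟩ := exists_le_of_horoLim_atTop hgeo b g v hv hd (-dist b w - 1)
  rw [hw] at hzle
  have : -dist b w ≤ horo b w z := by
    have := @dist_nonneg _ _ z w
    rw [horo]; linarith
  linarith

end StmtAux

open StmtAux in
/-- structure of horofunctions of a product of proper geodesic metric spaces. -/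
theorem stmt_3 (p : ℕ) (M : Fin p → Type*) [∀ j, MetricSpace (M j)] [∀ j, ProperSpace (M j)]
    (hgeo : ∀ j, IsGeodesicSpace (M j))
    (b : ∀ j, M j) (h : (∀ j, M j) → ℝ) (hh : IsHorofunction b h)
    (y : ℕ → ∀ j, M j) (hy : HoroLim b y h) :
    ∃ (J : Finset (Fin p)) (hJ : J.Nonempty) (hs : ∀ j, M j → ℝ) (α : Fin p → ℝ)
      (σ : ℕ → ℕ), StrictMono σ ∧
      (∀ j ∈ J, IsHorofunction (b j) (hs j)) ∧
      (∀ j ∈ J, 0 ≤ α j) ∧ (∃ j ∈ J, α j = 0) ∧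
      (∀ j ∈ J, Filter.Tendsto
        (fun k => dist b (y (σ k)) - dist (b j) (y (σ k) j)) Filter.atTop (nhds (α j))) ∧
      (∀ i ∉ J, Filter.Tendsto
        (fun k => dist b (y (σ k)) - dist (b i) (y (σ k) i)) Filter.atTop Filter.atTop) ∧
      (∀ j ∈ J, ∀ z : M j, Filter.Tendsto
        (fun k => horo (b j) (y (σ k) j) z) Filter.atTop (nhds (hs j z))) ∧
      (∀ x : ∀ j, M j, h x = J.sup' hJ fun j => hs j (x j) - α j) := by
  classical
  -- p = 0 is impossible
  rcases Nat.eq_zero_or_pos p with hp | hp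
  · exfalso
    subst hp
    apply hh.2 b
    funext z
    have hzb : z = b := funext fun j => j.elim0
    have h0 : ∀ n, horo b (y n) z = 0 := by
      intro n
      have : z = y n := funext fun j => j.elim0
      rw [horo, ← this, hzb]
      simp
    have h1 : Tendsto (fun n => horo b (y n) z) atTop (𝓝 (h z)) := hy z
    have h2 : Tendsto (fun n => horo b (y n) z) atTop (𝓝 0) := by
      simp only [h0]; exact tendsto_const_nhds
    have : h z = 0 := tendsto_nhds_unique h1 h2
    rw [this, horo, hzb]
    simp
  have hne : (Finset.univ : Finset (Fin p)).Nonempty := ⟨⟨0, hp⟩, Finset.mem_univ _⟩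
  -- countable dense subsets
  have hsep : ∀ j, ∃ s : Set (M j), s.Countable ∧ Dense s := fun j =>
    TopologicalSpace.exists_countable_dense (M j)
  choose s hsc hsd using hsep
  haveI : ∀ j, Countable (s j) := fun j => (hsc j).to_subtype
  -- the gaps r j n
  have hr0 : ∀ (j) (n : ℕ), 0 ≤ dist b (y n) - dist (b j) (y n j) :=
    fun j n => sub_nonneg.2 (dist_le_pi_dist b (y n) j)
  -- one giant compactness extraction
  let u : ℕ → (Fin p → EReal) × (∀ j, s j → EReal) := fun n =>
    (fun j => ((dist b (y n) - dist (b j) (y n j) : ℝ) : EReal),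
     fun j w => ((horo (b j) (y n j) (w : M j) : ℝ) : EReal))
  obtain ⟨L, -, σ, hσ, hL⟩ := isCompact_univ.tendsto_subseq (x := u) (fun n => Set.mem_univ _)
  have hfst : Tendsto (fun k => (u (σ k)).1) atTop (𝓝 L.1) := (continuous_fst.tendsto L).comp hL
  have hsnd : Tendsto (fun k => (u (σ k)).2) atTop (𝓝 L.2) := (continuous_snd.tendsto L).comp hL
  have hL1 : ∀ j, Tendsto
      (fun k => ((dist b (y (σ k)) - dist (b j) (y (σ k) j) : ℝ) : EReal)) atTop (𝓝 (L.1 j)) :=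
    fun j => tendsto_pi_nhds.1 hfst j
  have hL2 : ∀ (j) (w : s j), Tendsto
      (fun k => ((horo (b j) (y (σ k) j) (w : M j) : ℝ) : EReal)) atTop (𝓝 (L.2 j w)) :=
    fun j w => tendsto_pi_nhds.1 (tendsto_pi_nhds.1 hsnd j) w
  have hL1nn : ∀ j, (0 : EReal) ≤ L.1 j := fun j =>
    ge_of_tendsto' (hL1 j) fun k => EReal.coe_nonneg.2 (hr0 j (σ k))
  have hL1bot : ∀ j, L.1 j ≠ ⊥ := by
    intro j hbot
    have := hL1nn j
    rw [hbot] at this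
    simp at this
  set J : Finset (Fin p) := Finset.univ.filter (fun j => L.1 j ≠ ⊤) with hJdef
  have hJmem : ∀ j, j ∈ J ↔ L.1 j ≠ ⊤ := fun j => by simp [hJdef]
  set α : Fin p → ℝ := fun j => (L.1 j).toReal with hα
  have hαconv : ∀ j ∈ J, Tendsto
      (fun k => dist b (y (σ k)) - dist (b j) (y (σ k) j)) atTop (𝓝 (α j)) := by
    intro j hj
    have hcoe : ((α j : ℝ) : EReal) = L.1 j := EReal.coe_toReal ((hJmem j).1 hj) (hL1bot j)
    rw [← EReal.tendsto_coe, hcoe]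
    exact hL1 j
  have hαnn : ∀ j ∈ J, 0 ≤ α j := fun j hj =>
    ge_of_tendsto' (hαconv j hj) fun k => hr0 j (σ k)
  have htop : ∀ i ∉ J, Tendsto
      (fun k => dist b (y (σ k)) - dist (b i) (y (σ k) i)) atTop atTop := by
    intro i hi
    have hLi : L.1 i = ⊤ := by
      by_contra hne'
      exact hi ((hJmem i).2 hne')
    have h' := hL1 i
    rw [hLi] at h'
    rw [tendsto_atTop]
    intro B
    filter_upwards [(EReal.tendsto_nhds_top_iff_real.1 h') B] with k hk
    exact le_of_lt (EReal.coe_lt_coe_iff.1 hk)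
  -- distance to basepoint blows up
  have hDinf : Tendsto (fun n => dist b (y n)) atTop atTop :=
    dist_tendsto_atTop_of_horofunction hh hy
  have hDσ : Tendsto (fun k => dist b (y (σ k))) atTop atTop := hDinf.comp hσ.tendsto_atTop
  -- some coordinate achieves the sup infinitely often
  have hexzero : ∀ n : ℕ, ∃ j, dist b (y n) - dist (b j) (y n j) = 0 := by
    intro n
    obtain ⟨j, -, hj⟩ := Finset.exists_mem_eq_sup' hne (fun j => dist (b j) (y n j))
    exact ⟨j, by rw [dist_pi_eq_sup' hne b (y n), hj]; ring⟩
  choose jj hjj using fun k => hexzero (σ k)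
  obtain ⟨j₀, hj₀inf⟩ := Finite.exists_infinite_fiber jj
  have hfreq : ∃ᶠ k in atTop, dist b (y (σ k)) - dist (b j₀) (y (σ k) j₀) = 0 := by
    rw [Nat.frequently_atTop_iff_infinite]
    refine (Set.infinite_coe_iff.1 hj₀inf).mono fun k hk => ?_
    have : jj k = j₀ := hk
    rw [← this]
    exact hjj k
  obtain ⟨φ, hφ, hφ0⟩ := Filter.extraction_of_frequently_atTop hfreq
  have hL1j₀ : L.1 j₀ = 0 := by
    have h1 : Tendsto
        (fun m => ((dist b (y (σ (φ m))) - dist (b j₀) (y (σ (φ m)) j₀) : ℝ) : EReal))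
        atTop (𝓝 (L.1 j₀)) := (hL1 j₀).comp hφ.tendsto_atTop
    have h2 : (fun m => ((dist b (y (σ (φ m))) - dist (b j₀) (y (σ (φ m)) j₀) : ℝ) : EReal))
        = fun _ => (0 : EReal) := by
      funext m
      rw [hφ0 m]
      simp
    rw [h2] at h1
    exact tendsto_nhds_unique h1 tendsto_const_nhds
  have hj₀J : j₀ ∈ J := (hJmem j₀).2 (by rw [hL1j₀]; simp)
  have hαj₀ : α j₀ = 0 := by rw [hα]; simp only; rw [hL1j₀]; simp
  have hJne : J.Nonempty := ⟨j₀, hj₀J⟩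
  -- pointwise limits exist everywhere
  have hconv : ∀ (j) (z : M j), ∃ c : ℝ,
      Tendsto (fun k => horo (b j) (y (σ k) j) z) atTop (𝓝 c) := by
    intro j z
    have hcauchy : CauchySeq (fun k => horo (b j) (y (σ k) j) z) := by
      rw [Metric.cauchySeq_iff]
      intro ε hε
      obtain ⟨w, hws, hwz⟩ := Metric.mem_closure_iff.1 ((hsd j).closure_eq ▸ Set.mem_univ z :
        z ∈ closure (s j)) (ε/4) (by linarith)
      have hwfin : ∃ c : ℝ, Tendsto (fun k => horo (b j) (y (σ k) j) w) atTop (𝓝 c) := by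
        have hconv' := hL2 j ⟨w, hws⟩
        have hub : L.2 j ⟨w, hws⟩ ≤ ((dist (b j) w : ℝ) : EReal) :=
          le_of_tendsto_of_tendsto' hconv' tendsto_const_nhds fun k =>
            EReal.coe_le_coe_iff.2 (le_trans (le_abs_self _) (abs_horo_le _ _ _))
        have hlb : ((-dist (b j) w : ℝ) : EReal) ≤ L.2 j ⟨w, hws⟩ :=
          le_of_tendsto_of_tendsto' tendsto_const_nhds hconv' fun k =>
            EReal.coe_le_coe_iff.2 (neg_le_of_abs_le (abs_horo_le _ _ _))
        have hne1 : L.2 j ⟨w, hws⟩ ≠ ⊤ := fun htp => by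
          rw [htp] at hub
          exact absurd hub (by simp)
        have hne2 : L.2 j ⟨w, hws⟩ ≠ ⊥ := fun hbt => by
          rw [hbt] at hlb
          exact absurd hlb (by simp)
        refine ⟨(L.2 j ⟨w, hws⟩).toReal, EReal.tendsto_coe.1 ?_⟩
        rw [EReal.coe_toReal hne1 hne2]
        exact hconv'
      obtain ⟨c, hc⟩ := hwfin
      obtain ⟨Nw, hNw⟩ := Metric.cauchySeq_iff.1 hc.cauchySeq (ε/2) (by linarith)
      refine ⟨Nw, fun m hm n hn => ?_⟩
      have tri := dist_triangle4 (horo (b j) (y (σ m) j) z) (horo (b j) (y (σ m) j) w)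
        (horo (b j) (y (σ n) j) w) (horo (b j) (y (σ n) j) z)
      have l1 : dist (horo (b j) (y (σ m) j) z) (horo (b j) (y (σ m) j) w) ≤ dist z w := by
        rw [Real.dist_eq]
        exact horo_lip _ _ _ _
      have l2 : dist (horo (b j) (y (σ n) j) w) (horo (b j) (y (σ n) j) z) ≤ dist z w := by
        rw [Real.dist_eq, dist_comm z w]
        exact horo_lip _ _ _ _
      have l3 := hNw m hm n hn
      calc dist (horo (b j) (y (σ m) j) z) (horo (b j) (y (σ n) j) z) ≤ _ := tri
        _ < ε := by linarith
    exact cauchySeq_tendsto_of_complete hcauchy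
  choose hs hhs using hconv
  -- coordinate distances blow up on J
  have hdistj : ∀ j ∈ J, Tendsto (fun k => dist (b j) (y (σ k) j)) atTop atTop := by
    intro j hj
    have heq : (fun k => dist (b j) (y (σ k) j)) =
        fun k => dist b (y (σ k)) + -(dist b (y (σ k)) - dist (b j) (y (σ k) j)) := by
      funext k; ring
    rw [heq]
    exact hDσ.atTop_add (hαconv j hj).neg
  have hhoro : ∀ j ∈ J, IsHorofunction (b j) (hs j) := fun j hj =>
    isHorofunction_of_dist_tendsto_atTop (hgeo j) (b j) (hs j)
      (fun k => y (σ k) j) (fun z => hhs j z) (hdistj j hj)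
  -- the formula
  have hformula : ∀ x : ∀ j, M j, h x = J.sup' hJne fun j => hs j (x j) - α j := by
    intro x
    have hEq : ∀ n : ℕ, horo b (y n) x = Finset.univ.sup' hne
        fun j => horo (b j) (y n j) (x j) - (dist b (y n) - dist (b j) (y n j)) := by
      intro n
      rw [horo, dist_pi_eq_sup' hne x (y n), ← sup'_sub_const]
      exact Finset.sup'_congr hne rfl fun j _ => by rw [horo]; ring
    set F : Fin p → ℕ → ℝ :=
      fun j k => horo (b j) (y (σ k) j) (x j) - (dist b (y (σ k)) - dist (b j) (y (σ k) j))
      with hF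
    have hFJ : ∀ j ∈ J, Tendsto (F j) atTop (𝓝 (hs j (x j) - α j)) := fun j hj =>
      (hhs j (x j)).sub (hαconv j hj)
    have hWeqJ : ∀ᶠ k in atTop,
        (Finset.univ.sup' hne fun j => F j k) = J.sup' hJne fun j => F j k := by
      have hev1 : ∀ᶠ k in atTop, hs j₀ (x j₀) - α j₀ - 1 < F j₀ k :=
        (hFJ j₀ hj₀J).eventually (eventually_gt_nhds (by linarith))
      have hev2 : ∀ᶠ k in atTop, ∀ i ∈ Finset.univ \ J, F i k < hs j₀ (x j₀) - α j₀ - 1 := by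
        rw [Filter.eventually_all_finset]
        intro i hi
        have hiJ : i ∉ J := (Finset.mem_sdiff.1 hi).2
        have hb : Tendsto (fun k => dist (b i) (x i)
            + -(dist b (y (σ k)) - dist (b i) (y (σ k) i))) atTop atBot :=
          tendsto_atBot_add_const_left _ _ (tendsto_neg_atTop_atBot.comp (htop i hiJ))
        have hle : ∀ k, F i k ≤ dist (b i) (x i)
            + -(dist b (y (σ k)) - dist (b i) (y (σ k) i)) := by
          intro k
          have := le_trans (le_abs_self _) (abs_horo_le (b i) (y (σ k) i) (x i))
          rw [hF]
          simp only
          linarith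
        exact (tendsto_atBot_mono hle hb).eventually (eventually_lt_atBot _)
      filter_upwards [hev1, hev2] with k h1 h2
      apply le_antisymm
      · apply Finset.sup'_le
        intro i _
        by_cases hiJ : i ∈ J
        · exact Finset.le_sup' (fun j => F j k) hiJ
        · have hmem : i ∈ Finset.univ \ J := Finset.mem_sdiff.2 ⟨Finset.mem_univ i, hiJ⟩
          exact le_trans (le_of_lt (lt_trans (h2 i hmem) h1)) (Finset.le_sup' (fun j => F j k) hj₀J)
      · exact Finset.sup'_le _ _ fun i _ => Finset.le_sup' (fun j => F j k) (Finset.mem_univ i)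
    have hlim1 : Tendsto (fun k => horo b (y (σ k)) x) atTop (𝓝 (h x)) :=
      (hy x).comp hσ.tendsto_atTop
    have hlim2 : Tendsto (fun k => J.sup' hJne fun j => F j k) atTop
        (𝓝 (J.sup' hJne fun j => hs j (x j) - α j)) :=
      tendsto_finset_sup' J hJne F _ hFJ
    have hlim1' : Tendsto (fun k => J.sup' hJne fun j => F j k) atTop (𝓝 (h x)) := by
      apply hlim1.congr'
      filter_upwards [hWeqJ] with k hk
      rw [hEq (σ k), hk]
    exact tendsto_nhds_unique hlim1' hlim2
  exact ⟨J, hJne, hs, α, σ, hσ, hhoro, hαnn, ⟨j₀, hj₀J, hαj₀⟩, hαconv, htop,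
    fun j _ z => hhs j z, hformula⟩
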